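/- For permutations u, v ∈ S_n, u ≤ v in the Bruhat order if and only if for all 1 ≤ j ≤ n and all 1 ≤ t ≤ n, |{r ∈ u([t]) : r < j}| ≥ |{r ∈ v([t]) : r < j}|, where u([t]) = {u(1),...,u(t)}. -/

import Mathlib

open Finset Polynomial

/-- The inversion number (Coxeter length) of a permutation of `ℕ`, counted on `{1, …, n}`. -/
def invNum (n : ℕ) (u : Equiv.Perm ℕ) : ℕ :=
  (((Finset.Icc 1 n) ×ˢ (Finset.Icc 1 n)).filter
    (fun p => p.1 < p.2 ∧ u p.2 < u p.1)).card

/-- `u` is a member of `S_n`: it fixes every point outside `{1, …, n}`. -/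
def IsPermOn (n : ℕ) (u : Equiv.Perm ℕ) : Prop :=
  ∀ m, m ∉ Finset.Icc 1 n → u m = m

/-- The adjacent transposition `s_i`, interchanging `i` and `i + 1`. -/
def sAdj (i : ℕ) : Equiv.Perm ℕ := Equiv.swap i (i + 1)

/-- The Bruhat order on `S_n`: `u ≤ v` iff `v` is obtained from `u` by successively
multiplying on the right by transpositions, increasing the length at each step. -/
def BruhatLE (n : ℕ) (u v : Equiv.Perm ℕ) : Prop :=
  Relation.ReflTransGen
    (fun a b => invNum n a < invNum n b ∧
      ∃ i j, 1 ≤ i ∧ i < j ∧ j ≤ n ∧ b = a * Equiv.swap i j) u v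

/-- `(S_n)^J`, the minimal coset representatives, where `J = S \ {s_e : e ∈ E}`. -/
def MinReps (n : ℕ) (E : Set ℕ) (u : Equiv.Perm ℕ) : Prop :=
  ∀ j, 1 ≤ j → j ≤ n - 1 → j ∉ E → invNum n u < invNum n (sAdj j * u)

/-- `|{r ∈ u⁻¹([m]) : r < j}|`, the number of positions `r < j` of `u` holding
an element of `{1, …, m}`. -/
def posLT (n m j : ℕ) (u : Equiv.Perm ℕ) : ℕ :=
  ((Finset.Icc 1 n).filter (fun r => r < j ∧ u r ∈ Finset.Icc 1 m)).card

/-- Deodhar's recursion with `x = q` for the parabolic `R`-polynomials of `S_n`,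
for `J = S \ {s_e : e ∈ E}`. -/
def IsRFamilyQ (n : ℕ) (E : Set ℕ)
    (R : Equiv.Perm ℕ → Equiv.Perm ℕ → Polynomial ℤ) : Prop :=
  (∀ u v, MinReps n E u → MinReps n E v → ¬ BruhatLE n u v → R u v = 0) ∧
  (∀ u, MinReps n E u → R u u = 1) ∧
  (∀ u v, MinReps n E u → MinReps n E v → BruhatLE n u v → u ≠ v →
    ∀ j, 1 ≤ j → j ≤ n - 1 → v (j + 1) < v j →
      ((u (j + 1) < u j → R u v = R (u * sAdj j) (v * sAdj j)) ∧
       (¬ u (j + 1) < u j → MinReps n E (u * sAdj j) →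
          R u v = X * R (u * sAdj j) (v * sAdj j) + (X - 1) * R u (v * sAdj j)) ∧
       (¬ u (j + 1) < u j → ¬ MinReps n E (u * sAdj j) →
          R u v = - R u (v * sAdj j))))


def cnt (w : Equiv.Perm ℕ) (t x : ℕ) : ℕ :=
  ((Finset.Icc 1 t).filter (fun r => w r < x)).card

lemma cnt_eq_image (w : Equiv.Perm ℕ) (t x : ℕ) :
    (((Finset.Icc 1 t).image w).filter (fun r => r < x)).card = cnt w t x := by
  rw [cnt, Finset.filter_image, Finset.card_image_of_injective _ w.injective]

lemma cnt_succ (w : Equiv.Perm ℕ) (s x : ℕ) :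
    cnt w (s + 1) x = cnt w s x + (if w (s + 1) < x then 1 else 0) := by
  unfold cnt
  have h : Finset.Icc 1 (s + 1) = insert (s + 1) (Finset.Icc 1 s) := by
    ext r; simp [Finset.mem_Icc]; omega
  rw [h, Finset.filter_insert]
  split_ifs with hc
  · rw [Finset.card_insert_of_notMem (by simp [Finset.mem_Icc])]
  · simp

lemma cnt_pred (w : Equiv.Perm ℕ) {i : ℕ} (hi : 1 ≤ i) (x : ℕ) :
    cnt w i x = cnt w (i - 1) x + (if w i < x then 1 else 0) := by
  obtain ⟨s, rfl⟩ : ∃ s, i = s + 1 := ⟨i - 1, by omega⟩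
  rw [Nat.add_sub_cancel]; exact cnt_succ w s x

lemma cnt_split (w : Equiv.Perm ℕ) {s t : ℕ} (h : s ≤ t) (x : ℕ) :
    cnt w t x = cnt w s x + ((Finset.Icc (s + 1) t).filter (fun r => w r < x)).card := by
  unfold cnt
  have hunion : Finset.Icc 1 t = Finset.Icc 1 s ∪ Finset.Icc (s + 1) t := by
    ext r; simp [Finset.mem_Icc]; omega
  rw [hunion, Finset.filter_union, Finset.card_union_of_disjoint]
  rw [Finset.disjoint_left]
  intro a ha hb
  simp [Finset.mem_Icc] at ha hb
  omega

lemma cnt_decomp (w : Equiv.Perm ℕ) {i t : ℕ} (h1 : 1 ≤ i) (h2 : i ≤ t) (x : ℕ) :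
    cnt w t x = cnt w (i - 1) x + (if w i < x then 1 else 0)
      + ((Finset.Icc (i + 1) t).filter (fun r => w r < x)).card := by
  rw [cnt_split w h2 x, cnt_pred w h1 x]

lemma cnt_eq_of_agree {u v : Equiv.Perm ℕ} {s : ℕ} (h : ∀ m, m ≤ s → u m = v m) (x : ℕ) :
    cnt u s x = cnt v s x := by
  unfold cnt
  congr 1
  apply Finset.filter_congr
  intro r hr
  simp [Finset.mem_Icc] at hr
  rw [h r hr.2]

lemma perm_mem {n : ℕ} {u : Equiv.Perm ℕ} (hu : IsPermOn n u) {r : ℕ}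
    (hr : r ∈ Finset.Icc 1 n) : u r ∈ Finset.Icc 1 n := by
  by_contra h
  have h2 := hu _ h
  have := u.injective h2
  rw [this] at h
  exact h hr

lemma cnt_top {n : ℕ} {w : Equiv.Perm ℕ} (hw : IsPermOn n w) {t : ℕ} (ht : t ≤ n) :
    cnt w t (n + 1) = t := by
  unfold cnt
  rw [Finset.filter_true_of_mem, Nat.card_Icc]
  · omega
  · intro r hr
    have : w r ∈ Finset.Icc 1 n := by
      apply perm_mem hw
      simp [Finset.mem_Icc] at hr ⊢
      omega
    simp [Finset.mem_Icc] at this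
    omega

lemma invNum_le_sq (n : ℕ) (u : Equiv.Perm ℕ) : invNum n u ≤ n * n := by
  unfold invNum
  calc _ ≤ ((Finset.Icc 1 n) ×ˢ (Finset.Icc 1 n)).card := Finset.card_filter_le _ _
  _ = n * n := by rw [Finset.card_product, Nat.card_Icc]; simp
lemma invNum_adj (n k : ℕ) (u : Equiv.Perm ℕ) (h1 : 1 ≤ k) (h2 : k + 1 ≤ n) :
    invNum n (u * Equiv.swap k (k + 1)) + (if u (k + 1) < u k then 1 else 0)
      = invNum n u + (if u k < u (k + 1) then 1 else 0) := by
  classical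
  set σ := Equiv.swap k (k + 1) with hσ
  have hσdef : ∀ r, σ r = if r = k then k + 1 else if r = k + 1 then k else r :=
    fun r => Equiv.swap_apply_def k (k + 1) r
  have hσσ : ∀ r, σ (σ r) = r := fun r => Equiv.swap_apply_self k (k + 1) r
  set A := ((Finset.Icc 1 n ×ˢ Finset.Icc 1 n).filter
    (fun p : ℕ × ℕ => p.1 < p.2 ∧ u p.2 < u p.1)) with hA
  set B := ((Finset.Icc 1 n ×ˢ Finset.Icc 1 n).filter
    (fun p : ℕ × ℕ => p.1 < p.2 ∧ (u * σ) p.2 < (u * σ) p.1)) with hB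
  have hmemA : ∀ p : ℕ × ℕ, p ∈ A ↔
      (1 ≤ p.1 ∧ p.1 ≤ n ∧ 1 ≤ p.2 ∧ p.2 ≤ n ∧ p.1 < p.2 ∧ u p.2 < u p.1) := by
    intro p; simp [hA, Finset.mem_filter, Finset.mem_product, Finset.mem_Icc]; tauto
  have hmemB : ∀ p : ℕ × ℕ, p ∈ B ↔
      (1 ≤ p.1 ∧ p.1 ≤ n ∧ 1 ≤ p.2 ∧ p.2 ≤ n ∧ p.1 < p.2 ∧ u (σ p.2) < u (σ p.1)) := by
    intro p; rw [hB, Finset.mem_filter]; simp only [Finset.mem_product, Finset.mem_Icc,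
      Equiv.Perm.mul_apply]; tauto
  have hσbd : ∀ r, 1 ≤ r → r ≤ n → 1 ≤ σ r ∧ σ r ≤ n := by
    intro r hr1 hr2; rw [hσdef]; split_ifs <;> omega
  have hσord : ∀ p q : ℕ, p < q → ¬(p = k ∧ q = k + 1) → σ p < σ q := by
    intro p q hpq hne; rw [hσdef, hσdef]; split_ifs <;> omega
  have key : (B.erase (k, k + 1)).card = (A.erase (k, k + 1)).card := by
    apply Finset.card_bij' (fun p _ => (σ p.1, σ p.2)) (fun p _ => (σ p.1, σ p.2))
    · intro p hp
      rw [Finset.mem_erase] at hp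
      obtain ⟨hpne, hp⟩ := hp
      rw [hmemB] at hp
      rw [Finset.mem_erase, hmemA]
      constructor
      · intro h
        rw [Prod.ext_iff] at h
        obtain ⟨ha, hb⟩ := h
        have ha' : p.1 = k + 1 := by
          have := congrArg σ ha; rw [hσσ] at this; rw [this, hσdef]; simp
        have hb' : p.2 = k := by
          have := congrArg σ hb; rw [hσσ] at this; rw [this, hσdef]; simp
        omega
      · refine ⟨(hσbd p.1 hp.1 hp.2.1).1, (hσbd p.1 hp.1 hp.2.1).2,
          (hσbd p.2 hp.2.2.1 hp.2.2.2.1).1, (hσbd p.2 hp.2.2.1 hp.2.2.2.1).2, ?_, hp.2.2.2.2.2⟩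
        apply hσord p.1 p.2 hp.2.2.2.2.1
        intro ⟨ha, hb⟩
        exact hpne (by rw [Prod.ext_iff]; exact ⟨ha, hb⟩)
    · intro p hp
      rw [Finset.mem_erase] at hp
      obtain ⟨hpne, hp⟩ := hp
      rw [hmemA] at hp
      rw [Finset.mem_erase, hmemB]
      constructor
      · intro h
        rw [Prod.ext_iff] at h
        obtain ⟨ha, hb⟩ := h
        have ha' : p.1 = k + 1 := by
          have := congrArg σ ha; rw [hσσ] at this; rw [this, hσdef]; simp
        have hb' : p.2 = k := by
          have := congrArg σ hb; rw [hσσ] at this; rw [this, hσdef]; simp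
        omega
      · refine ⟨(hσbd p.1 hp.1 hp.2.1).1, (hσbd p.1 hp.1 hp.2.1).2,
          (hσbd p.2 hp.2.2.1 hp.2.2.2.1).1, (hσbd p.2 hp.2.2.1 hp.2.2.2.1).2, ?_, ?_⟩
        · apply hσord p.1 p.2 hp.2.2.2.2.1
          intro ⟨ha, hb⟩
          exact hpne (by rw [Prod.ext_iff]; exact ⟨ha, hb⟩)
        · rw [hσσ, hσσ]; exact hp.2.2.2.2.2
    · intro p _; simp [hσσ]
    · intro p _; simp [hσσ]
  have hσk : σ k = k + 1 := by rw [hσdef]; simp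
  have hσk1 : σ (k + 1) = k := by rw [hσdef]; simp
  have hptB : ((k, k + 1) ∈ B) ↔ u k < u (k + 1) := by
    rw [hmemB]; simp [hσk, hσk1]; omega
  have hptA : ((k, k + 1) ∈ A) ↔ u (k + 1) < u k := by
    rw [hmemA]; simp; omega
  have hiA : invNum n u = A.card := rfl
  have hiB : invNum n (u * σ) = B.card := rfl
  rw [hiA, hiB]
  by_cases hb : (k, k + 1) ∈ B <;> by_cases ha : (k, k + 1) ∈ A
  · rw [hptB] at hb; rw [hptA] at ha; omega
  · have hord := hptB.mp hb
    have e1 := Finset.card_erase_of_mem hb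
    have e2 : 1 ≤ B.card := Finset.card_pos.mpr ⟨_, hb⟩
    rw [Finset.erase_eq_of_notMem ha] at key
    rw [if_neg (show ¬ u (k + 1) < u k by omega), if_pos hord]
    omega
  · have hord := hptA.mp ha
    have e1 := Finset.card_erase_of_mem ha
    have e2 : 1 ≤ A.card := Finset.card_pos.mpr ⟨_, ha⟩
    rw [Finset.erase_eq_of_notMem hb] at key
    rw [if_pos hord, if_neg (show ¬ u k < u (k + 1) by omega)]
    omega
  · rw [Finset.erase_eq_of_notMem hb, Finset.erase_eq_of_notMem ha] at key
    rw [if_neg (fun h => ha (hptA.mpr h)), if_neg (fun h => hb (hptB.mpr h))]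
    omega

lemma invNum_swap_lt (n : ℕ) : ∀ d i j : ℕ, ∀ u : Equiv.Perm ℕ, j - i ≤ d → 1 ≤ i → i < j →
    j ≤ n → u i < u j → invNum n u < invNum n (u * Equiv.swap i j) := by
  intro d
  induction d with
  | zero => intro i j u hd hi hij hj hu; omega
  | succ d ih =>
    intro i j u hd hi hij hj hu
    by_cases hadj : j = i + 1
    · subst hadj
      have h := invNum_adj n i u hi hj
      rw [if_pos hu, if_neg (by omega)] at h
      omega
    · have hj2 : i + 1 < j := by omega
      set w1 := u * Equiv.swap i (i + 1) with hw1
      set z := w1 * Equiv.swap (i + 1) j with hz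
      have hne1 : (i : ℕ) ≠ i + 1 := by omega
      have hne2 : (j : ℕ) ≠ i := by omega
      have hne3 : (j : ℕ) ≠ i + 1 := by omega
      have hw1i : w1 i = u (i + 1) := by
        rw [hw1, Equiv.Perm.mul_apply, Equiv.swap_apply_left]
      have hw1i1 : w1 (i + 1) = u i := by
        rw [hw1, Equiv.Perm.mul_apply, Equiv.swap_apply_right]
      have hw1j : w1 j = u j := by
        rw [hw1, Equiv.Perm.mul_apply, Equiv.swap_apply_of_ne_of_ne hne2 hne3]
      have hzi : z i = u (i + 1) := by
        rw [hz, Equiv.Perm.mul_apply, Equiv.swap_apply_of_ne_of_ne (by omega) (by omega), hw1i]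
      have hzi1 : z (i + 1) = u j := by
        rw [hz, Equiv.Perm.mul_apply, Equiv.swap_apply_left, hw1j]
      have hdecomp : u * Equiv.swap i j = z * Equiv.swap i (i + 1) := by
        rw [hz, hw1, mul_assoc, mul_assoc]
        congr 1
        ext r
        simp only [Equiv.Perm.mul_apply, Equiv.swap_apply_def]
        split_ifs <;> omega
      have hih : invNum n w1 < invNum n z := by
        apply ih (i + 1) j w1 (by omega) (by omega) hj2 hj
        rw [hw1i1, hw1j]; exact hu
      have hadj1 := invNum_adj n i u hi (by omega)
      rw [← hw1] at hadj1
      have hadj2 := invNum_adj n i z hi (by omega)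
      rw [hzi, hzi1, ← hdecomp] at hadj2
      have hnei1 : u (i + 1) ≠ u i := fun h => hne1 (u.injective h).symm
      have hnej : u (i + 1) ≠ u j := fun h => hne3.symm (u.injective h)
      rcases lt_or_gt_of_ne hnei1 with hc | hc
      · -- u (i+1) < u i < u j : invNum w1 + 1 = invNum u; final = invNum z + 1
        rw [if_pos hc, if_neg (by omega)] at hadj1
        rw [if_neg (by omega), if_pos (by omega)] at hadj2
        omega
      · rcases lt_or_gt_of_ne hnej with hc2 | hc2
        · -- u i < u (i+1) < u j
          rw [if_neg (by omega), if_pos (by omega)] at hadj1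
          rw [if_neg (by omega), if_pos (by omega)] at hadj2
          omega
        · -- u i < u j < u (i+1)
          rw [if_neg (by omega), if_pos (by omega)] at hadj1
          rw [if_pos (by omega), if_neg (by omega)] at hadj2
          omega

lemma lt_of_invNum_step {n i j : ℕ} {u : Equiv.Perm ℕ} (hi : 1 ≤ i) (hij : i < j) (hj : j ≤ n)
    (h : invNum n u < invNum n (u * Equiv.swap i j)) : u i < u j := by
  rcases lt_trichotomy (u i) (u j) with h' | h' | h'
  · exact h'
  · exact absurd (u.injective h') (by omega)
  · exfalso
    have hb : (u * Equiv.swap i j) i < (u * Equiv.swap i j) j := by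
      rw [Equiv.Perm.mul_apply, Equiv.Perm.mul_apply, Equiv.swap_apply_left,
        Equiv.swap_apply_right]
      exact h'
    have := invNum_swap_lt n (j - i) i j (u * Equiv.swap i j) le_rfl hi hij hj hb
    rw [mul_assoc, Equiv.swap_mul_self, mul_one] at this
    omega

lemma cnt_mul_swap_lo {i j t : ℕ} (u : Equiv.Perm ℕ) (hij : i < j) (ht : t < i) (x : ℕ) :
    cnt (u * Equiv.swap i j) t x = cnt u t x := by
  unfold cnt
  congr 1
  apply Finset.filter_congr
  intro r hr
  simp only [Finset.mem_Icc] at hr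
  rw [Equiv.Perm.mul_apply, Equiv.swap_apply_of_ne_of_ne (by omega) (by omega)]

lemma cnt_mul_swap_hi {i j t : ℕ} (u : Equiv.Perm ℕ) (hi : 1 ≤ i) (hij : i < j) (ht : j ≤ t)
    (x : ℕ) : cnt (u * Equiv.swap i j) t x = cnt u t x := by
  unfold cnt
  rw [Finset.card_filter, Finset.card_filter]
  apply Finset.sum_equiv (Equiv.swap i j)
  · intro r
    simp only [Finset.mem_Icc, Equiv.swap_apply_def]
    split_ifs <;> omega
  · intro r _
    rfl

lemma cnt_mul_swap_mid {i j t : ℕ} (u : Equiv.Perm ℕ) (hi : 1 ≤ i) (hij : i < j) (hit : i ≤ t)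
    (htj : t < j) (x : ℕ) :
    cnt (u * Equiv.swap i j) t x + (if u i < x then 1 else 0)
      = cnt u t x + (if u j < x then 1 else 0) := by
  unfold cnt
  rw [Finset.card_filter, Finset.card_filter]
  have hmem : i ∈ Finset.Icc 1 t := by simp [Finset.mem_Icc]; omega
  rw [← Finset.add_sum_erase _ _ hmem, ← Finset.add_sum_erase _ _ hmem]
  have h1 : (u * Equiv.swap i j) i = u j := by
    rw [Equiv.Perm.mul_apply, Equiv.swap_apply_left]
  have h2 : ∀ r ∈ (Finset.Icc 1 t).erase i,
      (if (u * Equiv.swap i j) r < x then 1 else 0) = (if u r < x then 1 else 0) := by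
    intro r hr
    simp only [Finset.mem_erase, Finset.mem_Icc] at hr
    rw [Equiv.Perm.mul_apply, Equiv.swap_apply_of_ne_of_ne hr.1 (by omega)]
  rw [Finset.sum_congr rfl h2, h1]
  omega

lemma cnt_le_step {n i j : ℕ} {u : Equiv.Perm ℕ} (hi : 1 ≤ i) (hij : i < j) (hj : j ≤ n)
    (hu : u i < u j) (t x : ℕ) : cnt (u * Equiv.swap i j) t x ≤ cnt u t x := by
  rcases lt_or_ge t i with h | h
  · rw [cnt_mul_swap_lo u hij h]
  · rcases le_or_gt j t with h' | h'
    · rw [cnt_mul_swap_hi u hi hij h']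
    · have := cnt_mul_swap_mid u hi hij h h' x
      have hmono : (if u j < x then 1 else 0) ≤ (if u i < x then 1 else 0) := by
        split_ifs with h1 h2 <;> omega
      omega

lemma isPermOn_mul_swap {n i j : ℕ} {u : Equiv.Perm ℕ} (hu : IsPermOn n u) (hi : 1 ≤ i)
    (hij : i < j) (hj : j ≤ n) : IsPermOn n (u * Equiv.swap i j) := by
  intro m hm
  simp only [Finset.mem_Icc, not_and, not_le] at hm
  have hmi : m ≠ i := by intro h; subst h; omega
  have hmj : m ≠ j := by intro h; subst h; omega
  rw [Equiv.Perm.mul_apply, Equiv.swap_apply_of_ne_of_ne hmi hmj]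
  apply hu
  simp only [Finset.mem_Icc, not_and, not_le]
  exact hm

lemma forward_counts {n : ℕ} {u v : Equiv.Perm ℕ} (h : BruhatLE n u v) :
    ∀ t x, cnt v t x ≤ cnt u t x := by
  induction h with
  | refl => exact fun t x => le_rfl
  | tail _ hbc ih =>
    obtain ⟨hinv, i, j, hi, hij, hj, rfl⟩ := hbc
    intro t x
    rename_i b _
    have hb : b i < b j := lt_of_invNum_step hi hij hj hinv
    exact le_trans (cnt_le_step hi hij hj hb t x) (ih t x)

lemma backward (n : ℕ) (v : Equiv.Perm ℕ) (hv : IsPermOn n v) :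
    ∀ d (u : Equiv.Perm ℕ), IsPermOn n u → n * n + 1 ≤ invNum n u + d →
      (∀ t, 1 ≤ t → t ≤ n → ∀ x, 1 ≤ x → x ≤ n → cnt v t x ≤ cnt u t x) →
      BruhatLE n u v := by
  intro d
  induction d with
  | zero =>
    intro u _ hbound _
    exact absurd (invNum_le_sq n u) (by omega)
  | succ d ih =>
    intro u hu hbound hcnt
    by_cases huv : u = v
    · exact huv ▸ Relation.ReflTransGen.refl
    have hcnt' : ∀ t, 1 ≤ t → t ≤ n → ∀ x, 1 ≤ x → x ≤ n + 1 → cnt v t x ≤ cnt u t x := by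
      intro t ht1 ht2 x hx1 hx2
      by_cases hx : x ≤ n
      · exact hcnt t ht1 ht2 x hx1 hx
      · have hxe : x = n + 1 := by omega
        subst hxe
        rw [cnt_top hv ht2, cnt_top hu ht2]
    set Dset := (Finset.Icc 1 n).filter (fun m => u m ≠ v m) with hD
    have hDne : Dset.Nonempty := by
      have hex : ∃ m, u m ≠ v m := by
        by_contra hc
        push_neg at hc
        exact huv (Equiv.ext hc)
      obtain ⟨m, hm⟩ := hex
      refine ⟨m, ?_⟩
      simp only [hD, Finset.mem_filter]
      refine ⟨?_, hm⟩
      by_contra hmI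
      exact hm ((hu m hmI).trans (hv m hmI).symm)
    set i := Dset.min' hDne with hidef
    have hiD : i ∈ Dset := Finset.min'_mem _ _
    simp only [hD, Finset.mem_filter, Finset.mem_Icc] at hiD
    obtain ⟨⟨hi1, hin⟩, hne_i⟩ := hiD
    have hmin_i : ∀ m, m < i → u m = v m := by
      intro m hm
      by_cases hmI : m ∈ Finset.Icc 1 n
      · by_contra hc
        have : i ≤ m := Finset.min'_le _ _ (by
          simp only [hD, Finset.mem_filter]; exact ⟨hmI, hc⟩)
        omega
      · rw [hu m hmI, hv m hmI]
    have hprefix : ∀ y, cnt u (i - 1) y = cnt v (i - 1) y :=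
      fun y => cnt_eq_of_agree (fun m hm => hmin_i m (by omega)) y
    have hui_mem : u i ∈ Finset.Icc 1 n := perm_mem hu (by simp [Finset.mem_Icc]; omega)
    have hvi_mem : v i ∈ Finset.Icc 1 n := perm_mem hv (by simp [Finset.mem_Icc]; omega)
    simp only [Finset.mem_Icc] at hui_mem hvi_mem
    have hui_lt : u i < v i := by
      rcases lt_or_gt_of_ne hne_i with h | h
      · exact h
      · exfalso
        have hc := hcnt i hi1 hin (u i) hui_mem.1 hui_mem.2
        rw [cnt_pred v hi1, cnt_pred u hi1, ← hprefix (u i), if_pos h,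
          if_neg (lt_irrefl _)] at hc
        omega
    set S := (Finset.Icc 1 n).filter (fun k => i < k ∧ u i < u k ∧ u k ≤ v i) with hSdef
    have hSne : S.Nonempty := by
      refine ⟨u.symm (v i), ?_⟩
      have hk0 : u (u.symm (v i)) = v i := u.apply_symm_apply (v i)
      have hk0I : u.symm (v i) ∈ Finset.Icc 1 n := by
        by_contra hk
        have h2 := hu _ hk
        rw [hk0] at h2
        rw [← h2] at hk
        exact hk (by simp [Finset.mem_Icc]; omega)
      have hk0i : i < u.symm (v i) := by
        rcases lt_trichotomy (u.symm (v i)) i with h | h | h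
        · exfalso
          have hagree := hmin_i _ h
          have heq : v (u.symm (v i)) = v i := by rw [← hagree, hk0]
          have := v.injective heq
          omega
        · exfalso
          apply hne_i
          rw [h] at hk0
          exact hk0
        · exact h
      simp only [hSdef, Finset.mem_filter]
      exact ⟨hk0I, hk0i, by rw [hk0]; exact hui_lt, by rw [hk0]⟩
    set j := S.min' hSne with hjdef
    have hjS : j ∈ S := Finset.min'_mem _ _
    simp only [hSdef, Finset.mem_filter, Finset.mem_Icc] at hjS
    obtain ⟨⟨hj1, hjn⟩, hij, huij, hujvi⟩ := hjS
    have hkey : ∀ k, i < k → k < j → u k ≤ v i → u k < u i := by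
      intro k h1 h2 h3
      by_contra h4
      push_neg at h4
      have h5 : u i < u k :=
        lt_of_le_of_ne h4 (fun heq => absurd (u.injective heq) (by omega))
      have hkS : k ∈ S := by
        simp only [hSdef, Finset.mem_filter, Finset.mem_Icc]
        exact ⟨⟨by omega, by omega⟩, h1, h5, h3⟩
      have := Finset.min'_le _ _ hkS
      omega
    have hstep : invNum n u < invNum n (u * Equiv.swap i j) :=
      invNum_swap_lt n (j - i) i j u le_rfl hi1 hij hjn huij
    apply Relation.ReflTransGen.head ⟨hstep, i, j, hi1, hij, hjn, rfl⟩
    apply ih (u * Equiv.swap i j) (isPermOn_mul_swap hu hi1 hij hjn) (by omega)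
    intro t ht1 htn x hx1 hxn
    rcases lt_or_ge t i with hlo | hge
    · rw [cnt_mul_swap_lo u hij hlo]
      exact hcnt t ht1 htn x hx1 hxn
    rcases le_or_gt j t with hhi | hmidt
    · rw [cnt_mul_swap_hi u hi1 hij hhi]
      exact hcnt t ht1 htn x hx1 hxn
    have hmid := cnt_mul_swap_mid u hi1 hij hge hmidt x
    by_cases hxle : x ≤ u i
    · rw [if_neg (by omega), if_neg (by omega)] at hmid
      have := hcnt t ht1 htn x hx1 hxn
      omega
    by_cases hxgt : u j < x
    · rw [if_pos (by omega), if_pos hxgt] at hmid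
      have := hcnt t ht1 htn x hx1 hxn
      omega
    push_neg at hxle hxgt
    rw [if_pos hxle, if_neg (by omega)] at hmid
    have hxvi : x ≤ v i := le_trans hxgt hujvi
    have hdu := cnt_decomp u hi1 hge x
    have hdv := cnt_decomp v hi1 hge x
    rw [if_pos hxle] at hdu
    rw [if_neg (by omega)] at hdv
    have hMu : ((Finset.Icc (i+1) t).filter (fun r => u r < x)).card
        = ((Finset.Icc (i+1) t).filter (fun r => u r < u i)).card := by
      congr 1
      apply Finset.filter_congr
      intro k hk
      simp only [Finset.mem_Icc] at hk
      constructor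
      · intro h
        exact hkey k (by omega) (by omega) (by omega)
      · intro h
        omega
    have hMv : ((Finset.Icc (i+1) t).filter (fun r => v r < x)).card
        ≤ ((Finset.Icc (i+1) t).filter (fun r => v r < v i + 1)).card := by
      apply Finset.card_le_card
      intro k hk
      simp only [Finset.mem_filter, Finset.mem_Icc] at hk ⊢
      exact ⟨hk.1, by omega⟩
    have hBA : ((Finset.Icc (i+1) t).filter (fun r => v r < v i + 1)).card
        ≤ ((Finset.Icc (i+1) t).filter (fun r => u r < u i)).card := by
      have hc := hcnt' t ht1 htn (v i + 1) (by omega) (by omega)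
      have hdu2 := cnt_decomp u hi1 hge (v i + 1)
      have hdv2 := cnt_decomp v hi1 hge (v i + 1)
      rw [if_pos (by omega : u i < v i + 1)] at hdu2
      rw [if_pos (by omega : v i < v i + 1)] at hdv2
      have hA2 : ((Finset.Icc (i+1) t).filter (fun r => u r < v i + 1)).card
          = ((Finset.Icc (i+1) t).filter (fun r => u r < u i)).card := by
        congr 1
        apply Finset.filter_congr
        intro k hk
        simp only [Finset.mem_Icc] at hk
        constructor
        · intro h
          exact hkey k (by omega) (by omega) (by omega)
        · intro h
          omega
      have hpre2 := hprefix (v i + 1)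
      omega
    have hpre := hprefix x
    omega


/-- Bruhat order via the counting criterion over all `t`. -/
theorem bruhat_iff_counts (n : ℕ) (u v : Equiv.Perm ℕ)
    (hu : IsPermOn n u) (hv : IsPermOn n v) :
    BruhatLE n u v ↔
      ∀ j, 1 ≤ j → j ≤ n → ∀ t, 1 ≤ t → t ≤ n →
        (((Finset.Icc 1 t).image v).filter (fun r => r < j)).card ≤
        (((Finset.Icc 1 t).image u).filter (fun r => r < j)).card := by
  constructor
  · intro h jj hj1 hjn t ht1 htn
    rw [cnt_eq_image, cnt_eq_image]
    exact forward_counts h t jj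
  · intro h
    apply backward n v hv (n * n + 1) u hu (by omega)
    intro t ht1 htn x hx1 hxn
    have hh := h x hx1 hxn t ht1 htn
    rw [cnt_eq_image, cnt_eq_image] at hh
    exact hh
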